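/- Let (k, u, F, C, d) be a hard uniform capacitated k-median instance with |C| ≤ u·|F|, and let C₀ be the minimum connection cost of the instance when all facilities in F are open, i.e., the minimum of Σ_{j∈C} d(j, τ(j)) over all assignments τ : C → F with |τ⁻¹(i)| ≤ u for every i ∈ F. Suppose there is a solution of cost C' to the soft uniform capacitated k-median instance (k, u, C, C, d): a multiset S of at most k facility locations chosen from C together with an assignment of each client to an open facility so that each open facility serves at most u clients, with total connection cost C'. Then there exists a set F' ⊆ F with |F'| ≤ k and an assignment σ : C → F' with |σ⁻¹(i)| ≤ u for every i ∈ F' whose cost Σ_{j∈C} d(j, σ(j)) is at most C₀ + 2C'. -/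

import Mathlib

open Finset

namespace CKMaux

variable {X : Type} [DecidableEq X]

/-- column load -/
def load (C : Finset X) (y : X → X → ℕ) (f : X) : ℕ := ∑ i ∈ C, y i f

def cost (C F : Finset X) (c : X → X → ℝ) (y : X → X → ℕ) : ℝ :=
  ∑ i ∈ C, ∑ f ∈ F, (y i f : ℝ) * c i f

def Supp (b y : X → X → ℕ) : Prop := ∀ i f, y i f ≠ 0 → b i f ≠ 0

def Rows (C F : Finset X) (b y : X → X → ℕ) : Prop :=
  ∀ i ∈ C, ∑ f ∈ F, y i f = ∑ f ∈ F, b i f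

/-- move one unit of row `i` from column `f` to column `g`. -/
def move (y : X → X → ℕ) (i f g : X) : X → X → ℕ :=
  fun i' f' => if i' = i then
    (if f' = f then y i' f' - 1 else if f' = g then y i' f' + 1 else y i' f')
    else y i' f'

lemma move_apply_ne {y : X → X → ℕ} {i f g i' f' : X}
    (h : i' ≠ i ∨ (f' ≠ f ∧ f' ≠ g)) : move y i f g i' f' = y i' f' := by
  rcases h with h | ⟨h1, h2⟩
  · simp [move, h]
  · by_cases hi : i' = i <;> simp [move, hi, h1, h2]

lemma move_apply_f {y : X → X → ℕ} {i f g : X} : move y i f g i f = y i f - 1 := by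
  simp [move]

lemma move_apply_g {y : X → X → ℕ} {i f g : X} (hfg : f ≠ g) :
    move y i f g i g = y i g + 1 := by
  simp [move, hfg.symm]

lemma sum_split_two {M : Type} [AddCommMonoid M] (s : Finset X) (t : X → M) {f g : X}
    (hf : f ∈ s) (hg : g ∈ s) (hfg : f ≠ g) :
    ∑ x ∈ s, t x = t f + t g + ∑ x ∈ (s.erase f).erase g, t x := by
  rw [← Finset.add_sum_erase s t hf, ← Finset.add_sum_erase (s.erase f) t
    (Finset.mem_erase.2 ⟨hfg.symm, hg⟩)]
  rw [add_assoc]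

section MoveProps

variable {C F : Finset X} {b : X → X → ℕ} {c : X → X → ℝ}
variable {y : X → X → ℕ} {i f g : X}

lemma move_supp (hs : Supp b y) (hbg : b i g ≠ 0) : Supp b (move y i f g) := by
  intro i' f' hne
  by_cases h1 : i' = i
  · subst h1
    by_cases h2 : f' = f
    · subst h2
      rw [move_apply_f] at hne
      exact hs _ _ (fun hz => hne (by simp [hz]))
    · by_cases h3 : f' = g
      · subst h3; exact hbg
      · rw [move_apply_ne (Or.inr ⟨h2, h3⟩)] at hne; exact hs _ _ hne
  · rw [move_apply_ne (Or.inl h1)] at hne; exact hs _ _ hne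


lemma move_rows (hr : Rows C F b y) (hfF : f ∈ F) (hgF : g ∈ F) (hfg : f ≠ g)
    (hyf : y i f ≠ 0) : Rows C F b (move y i f g) := by
  intro i' hi'
  by_cases h1 : i' = i
  · subst h1
    have heq : ∑ f' ∈ F, move y i' f g i' f' = ∑ f' ∈ F, y i' f' := by
      have hx3 : ∑ x ∈ (F.erase f).erase g, move y i' f g i' x
          = ∑ x ∈ (F.erase f).erase g, y i' x :=
        Finset.sum_congr rfl (fun x hx => move_apply_ne
          (Or.inr ⟨(Finset.mem_erase.1 (Finset.mem_erase.1 hx).2).1,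
            (Finset.mem_erase.1 hx).1⟩))
      rw [sum_split_two F _ hfF hgF hfg, sum_split_two F (fun f' => y i' f') hfF hgF hfg,
        move_apply_f, move_apply_g hfg, hx3]
      have h1 : 1 ≤ y i' f := Nat.one_le_iff_ne_zero.2 hyf
      omega
    rw [heq]
    exact hr i' hi'
  · rw [Finset.sum_congr rfl (fun x _ => move_apply_ne (Or.inl h1))]
    exact hr i' hi'

lemma move_load_f (hiC : i ∈ C) (hyf : y i f ≠ 0) (hfg : f ≠ g) :
    load C (move y i f g) f + 1 = load C y f := by
  unfold load
  rw [← Finset.add_sum_erase C _ hiC, ← Finset.add_sum_erase C (fun i' => y i' f) hiC,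
    Finset.sum_congr rfl (fun x hx => move_apply_ne (Or.inl (Finset.mem_erase.1 hx).1)),
    move_apply_f]
  omega

lemma move_load_g (hiC : i ∈ C) (hfg : f ≠ g) :
    load C (move y i f g) g = load C y g + 1 := by
  unfold load
  rw [← Finset.add_sum_erase C _ hiC, ← Finset.add_sum_erase C (fun i' => y i' g) hiC,
    Finset.sum_congr rfl (fun x hx => move_apply_ne (Or.inl (Finset.mem_erase.1 hx).1)),
    move_apply_g hfg]
  omega

lemma move_load_other {h : X} (hf : h ≠ f) (hg : h ≠ g) :
    load C (move y i f g) h = load C y h := by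
  unfold load
  exact Finset.sum_congr rfl (fun x _ => move_apply_ne (Or.inr ⟨hf, hg⟩))

lemma move_cost (hiC : i ∈ C) (hfF : f ∈ F) (hgF : g ∈ F) (hfg : f ≠ g) (hyf : y i f ≠ 0) :
    cost C F c (move y i f g) = cost C F c y + (c i g - c i f) := by
  unfold cost
  rw [← Finset.add_sum_erase C _ hiC, ← Finset.add_sum_erase C
    (fun i' => ∑ f' ∈ F, (y i' f' : ℝ) * c i' f') hiC,
    Finset.sum_congr rfl (fun x hx => Finset.sum_congr rfl (fun f' _ => by
      rw [move_apply_ne (Or.inl (Finset.mem_erase.1 hx).1)])),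
    sum_split_two F _ hfF hgF hfg,
    sum_split_two F (fun f' => (y i f' : ℝ) * c i f') hfF hgF hfg,
    move_apply_f, move_apply_g hfg,
    Finset.sum_congr rfl (fun x hx => by
      rw [move_apply_ne (y := y) (i := i) (f := f) (g := g) (i' := i) (f' := x)
        (Or.inr ⟨(Finset.mem_erase.1 (Finset.mem_erase.1 hx).2).1,
          (Finset.mem_erase.1 hx).1⟩)])]
  have h1 : ((y i f - 1 : ℕ) : ℝ) = (y i f : ℝ) - 1 := by
    have : 1 ≤ y i f := Nat.one_le_iff_ne_zero.2 hyf
    push_cast [this]; ring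
  rw [h1]
  push_cast
  ring

end MoveProps


section Shift

variable {C F : Finset X} {b : X → X → ℕ} {c : X → X → ℝ}

/-- auxiliary graph on columns: two columns are adjacent if some row has mass on both -/
def graph (C : Finset X) (y : X → X → ℕ) : SimpleGraph X :=
  SimpleGraph.fromRel (fun f g => ∃ i ∈ C, y i f ≠ 0 ∧ y i g ≠ 0)

lemma shift (y : X → X → ℕ) (hbC : ∀ i f, b i f ≠ 0 → i ∈ C ∧ f ∈ F)
    (hs : Supp b y) (hr : Rows C F b y) :
    ∀ {f g : X} (w : (graph C y).Walk f g), w.IsPath → f ≠ g →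
    ∃ (D : ℝ) (y1 y2 : X → X → ℕ),
      Supp b y1 ∧ Supp b y2 ∧ Rows C F b y1 ∧ Rows C F b y2 ∧
      cost C F c y1 = cost C F c y + D ∧ cost C F c y2 = cost C F c y - D ∧
      (∀ h, h ≠ f → h ≠ g → load C y1 h = load C y h ∧ load C y2 h = load C y h) ∧
      load C y1 f + 1 = load C y f ∧ load C y1 g = load C y g + 1 ∧
      load C y2 f = load C y f + 1 ∧ load C y2 g + 1 = load C y g ∧
      (∀ i' h', h' ∉ w.support → (y1 i' h' = y i' h' ∧ y2 i' h' = y i' h')) ∧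
      (∀ i', y i' f ≤ y2 i' f) := by
  intro f g w
  induction w with
  | nil => intro _ hne; exact absurd rfl hne
  | @cons f h g a w ih =>
    intro hp hne
    obtain ⟨hfh, hor⟩ := (SimpleGraph.fromRel_adj _ _ _).1 a
    have hwit : ∃ i ∈ C, y i f ≠ 0 ∧ y i h ≠ 0 := by
      rcases hor with h1 | h1
      · exact h1
      · obtain ⟨i, hiC, h2, h3⟩ := h1; exact ⟨i, hiC, h3, h2⟩
    obtain ⟨i, hiC, hyf, hyh⟩ := hwit
    have hfF : f ∈ F := (hbC i f (hs i f hyf)).2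
    have hhF : h ∈ F := (hbC i h (hs i h hyh)).2
    have hsup : (SimpleGraph.Walk.cons a w).support = f :: w.support :=
      SimpleGraph.Walk.support_cons a w
    by_cases hcase : h = g
    · subst hcase
      refine ⟨c i h - c i f, move y i f h, move y i h f,
        move_supp hs (hs i h hyh), move_supp hs (hs i f hyf),
        move_rows hr hfF hhF hne hyf, move_rows hr hhF hfF hne.symm hyh,
        move_cost hiC hfF hhF hne hyf, by rw [move_cost hiC hhF hfF hne.symm hyh]; ring,
        fun h' h'f h'g => ⟨move_load_other h'f h'g, move_load_other h'g h'f⟩,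
        move_load_f hiC hyf hne, move_load_g hiC hne,
        move_load_g hiC hne.symm, move_load_f hiC hyh hne.symm,
        ?_, ?_⟩
      · intro i' h' hh'
        rw [hsup] at hh'
        have h'f : h' ≠ f := fun e => hh' (by simp [e])
        have h'g : h' ≠ h := fun e => hh'
          (by simp [e, SimpleGraph.Walk.start_mem_support])
        exact ⟨move_apply_ne (Or.inr ⟨h'f, h'g⟩), move_apply_ne (Or.inr ⟨h'g, h'f⟩)⟩
      · intro i'
        by_cases hii : i' = i
        · subst hii; rw [move_apply_g hne.symm]; omega
        · rw [move_apply_ne (Or.inl hii)]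
    · rw [SimpleGraph.Walk.cons_isPath_iff] at hp
      obtain ⟨D', y1', y2', hs1, hs2, hr1, hr2, hc1, hc2, hlo, hl1f, hl1g, hl2f, hl2g,
        hoff, hmono⟩ := ih hp.1 hcase
      have hy1f : y1' i f ≠ 0 := by rw [(hoff i f hp.2).1]; exact hyf
      have hy2h : y2' i h ≠ 0 := fun e => hyh (Nat.le_zero.1 (e ▸ hmono i))
      have hgn : g ≠ f := hne.symm
      have hgh : g ≠ h := fun e => hcase e.symm
      refine ⟨D' + (c i h - c i f), move y1' i f h, move y2' i h f,
        move_supp hs1 (hs i h hyh), move_supp hs2 (hs i f hyf),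
        move_rows hr1 hfF hhF hfh hy1f, move_rows hr2 hhF hfF hfh.symm hy2h,
        by rw [move_cost hiC hfF hhF hfh hy1f, hc1]; ring,
        by rw [move_cost hiC hhF hfF hfh.symm hy2h, hc2]; ring,
        ?_, ?_, ?_, ?_, ?_, ?_, ?_⟩
      · intro h' h'f h'g
        by_cases h'h : h' = h
        · subst h'h
          have e1 : load C (move y1' i f h') h' = load C y1' h' + 1 := move_load_g hiC hfh
          have e2 : load C (move y2' i h' f) h' + 1 = load C y2' h' := move_load_f hiC hy2h hfh.symm
          have i1 := hl1f
          have i2 := hl2f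
          constructor <;> omega
        · have e1 : load C (move y1' i f h) h' = load C y1' h' := move_load_other h'f h'h
          have e2 : load C (move y2' i h f) h' = load C y2' h' := move_load_other h'h h'f
          rw [e1, e2]
          exact hlo h' h'h h'g
      · have e1 : load C (move y1' i f h) f + 1 = load C y1' f := move_load_f hiC hy1f hfh
        have e2 : load C y1' f = load C y f := (hlo f hfh hne).1
        omega
      · have e1 : load C (move y1' i f h) g = load C y1' g := move_load_other hgn hgh
        rw [e1]; exact hl1g
      · have e1 : load C (move y2' i h f) f = load C y2' f + 1 := move_load_g hiC hfh.symm
        have e2 : load C y2' f = load C y f := (hlo f hfh hne).2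
        omega
      · have e1 : load C (move y2' i h f) g = load C y2' g := move_load_other hgh hgn
        rw [e1]; exact hl2g
      · intro i' h' hh'
        rw [hsup] at hh'
        have h'f : h' ≠ f := fun e => hh' (by simp [e])
        have h'w : h' ∉ w.support := fun e => hh' (by simp [e])
        have h'h : h' ≠ h := fun e => hh' (by simp [e, SimpleGraph.Walk.start_mem_support])
        refine ⟨?_, ?_⟩
        · rw [move_apply_ne (Or.inr ⟨h'f, h'h⟩)]; exact (hoff i' h' h'w).1
        · rw [move_apply_ne (Or.inr ⟨h'h, h'f⟩)]; exact (hoff i' h' h'w).2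
      · intro i'
        have hbase : y i' f ≤ y2' i' f := by rw [(hoff i' f hp.2).2]
        by_cases hii : i' = i
        · subst hii; rw [move_apply_g hfh.symm]; omega
        · rw [move_apply_ne (Or.inl hii)]; exact hbase

end Shift


lemma choose_eq {X : Type} [DecidableEq X] {s t : Finset X} (e : s = t) (h1 : s.Nonempty)
    (h2 : t.Nonempty) : h1.choose = h2.choose := by subst e; rfl

lemma ceil_bound {u : ℕ} (hu : 0 < u) (n : ℕ) : n ≤ u * ((n + (u - 1)) / u) := by
  have h := Nat.div_add_mod (n + (u - 1)) u
  have h2 : (n + (u - 1)) % u < u := Nat.mod_lt _ hu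
  obtain ⟨m, hm⟩ : ∃ m, u * ((n + (u - 1)) / u) = m := ⟨_, rfl⟩
  obtain ⟨r, hrr⟩ : ∃ r, (n + (u - 1)) % u = r := ⟨_, rfl⟩
  rw [hm, hrr] at h
  rw [hm]
  rw [hrr] at h2
  omega

section Count

variable {C F : Finset X} {b : X → X → ℕ} {u : ℕ}

lemma count (y : X → X → ℕ) (hu : 0 < u)
    (hsy : Supp b y) (hry : Rows C F b y) (hcap : ∀ f ∈ F, load C y f ≤ u)
    (hb : ∀ i f, b i f ≠ 0 → i ∈ C ∧ f ∈ F)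
    (key : ∀ f g, f ∈ F → g ∈ F → (graph C y).Reachable f g →
      load C y f < u → load C y g < u → f = g) :
    (F.filter (fun f => load C y f ≠ 0)).card
      ≤ ∑ i ∈ C, ((∑ f ∈ F, b i f) + (u - 1)) / u := by
  classical
  set U := F.filter (fun f => load C y f ≠ 0) with hU
  have hUF : U ⊆ F := Finset.filter_subset _ _
  set conn := (graph C y).Reachable with hconn
  -- if two columns share a row, they are connected
  have hstep : ∀ {i f g}, i ∈ C → y i f ≠ 0 → y i g ≠ 0 → conn f g := by
    intro i f g hiC h1 h2
    by_cases hfg : f = g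
    · exact hfg ▸ SimpleGraph.Reachable.refl f
    · exact SimpleGraph.Adj.reachable
        ((SimpleGraph.fromRel_adj _ _ _).2 ⟨hfg, Or.inl ⟨i, hiC, h1, h2⟩⟩)
  -- nonzero entries give used columns
  have hentU : ∀ {i f}, i ∈ C → y i f ≠ 0 → f ∈ U := by
    intro i f hiC hyif
    have hfF : f ∈ F := (hb i f (hsy i f hyif)).2
    have : y i f ≤ load C y f := Finset.single_le_sum (f := fun i' => y i' f)
      (fun _ _ => Nat.zero_le _) hiC
    exact Finset.mem_filter.2 ⟨hfF, by omega⟩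
  set K : X → Finset X := fun f => U.filter (fun f' => conn f f') with hK
  have hKU : ∀ f, K f ⊆ U := fun f => Finset.filter_subset _ _
  have hKmem : ∀ {f}, f ∈ U → f ∈ K f := fun hf =>
    Finset.mem_filter.2 ⟨hf, SimpleGraph.Reachable.refl _⟩
  have hKeq : ∀ {f g}, conn f g → K f = K g := by
    intro f g h
    apply Finset.filter_congr
    intro x _
    exact ⟨fun hx => h.symm.trans hx, fun hx => h.trans hx⟩
  set rep : X → X := fun f => if h : (K f).Nonempty then h.choose else f with hrep
  have hrepK : ∀ {f}, f ∈ U → rep f ∈ K f := by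
    intro f hf
    have hne : (K f).Nonempty := ⟨f, hKmem hf⟩
    simp only [hrep, dif_pos hne]
    exact hne.choose_spec
  have hrep_eq : ∀ {f g}, f ∈ U → g ∈ U → conn f g → rep f = rep g := by
    intro f g hf hg h
    have e : K f = K g := hKeq h
    have h1 : (K f).Nonempty := ⟨f, hKmem hf⟩
    have h2 : (K g).Nonempty := ⟨g, hKmem hg⟩
    simp only [hrep, dif_pos h1, dif_pos h2]
    exact choose_eq e h1 h2
  have hrep_conn : ∀ {f}, f ∈ U → conn f (rep f) ∧ rep f ∈ U := by
    intro f hf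
    have := hrepK hf
    rw [Finset.mem_filter] at this
    exact ⟨this.2, this.1⟩
  set D := U.image rep with hD
  have hcards : U.card = ∑ d ∈ D, (U.filter (fun x => rep x = d)).card :=
    Finset.card_eq_sum_card_fiberwise (fun f hf => Finset.mem_image_of_mem _ hf)
  have hdU : ∀ {d}, d ∈ D → d ∈ U ∧ rep d = d := by
    intro d hd
    obtain ⟨f₀, hf₀, rfl⟩ := Finset.mem_image.1 hd
    obtain ⟨hc, hu'⟩ := hrep_conn hf₀
    exact ⟨hu', (hrep_eq hf₀ hu' hc).symm⟩
  have hfib : ∀ {d}, d ∈ D → U.filter (fun x => rep x = d) = K d := by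
    intro d hd
    obtain ⟨hdU', hrepd⟩ := hdU hd
    ext x
    simp only [Finset.mem_filter, hK]
    constructor
    · rintro ⟨hxU, hx⟩
      exact ⟨hxU, (hx ▸ (hrep_conn hxU).1 : conn x d).symm⟩
    · rintro ⟨hxU, hx⟩
      rw [hrep_eq hxU hdU' hx.symm, hrepd]
      exact ⟨hxU, rfl⟩
  set R : X → Finset X := fun d => C.filter (fun i => ∃ f' ∈ U, y i f' ≠ 0 ∧ rep f' = d)
    with hR
  -- each component's cardinality is bounded
  have hcomp : ∀ d ∈ D, (K d).card ≤ ∑ i ∈ R d, ((∑ f ∈ F, b i f) + (u - 1)) / u := by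
    intro d hd
    obtain ⟨hdU', hrepd⟩ := hdU hd
    -- mass identity
    have hmass : ∑ f ∈ K d, load C y f = ∑ i ∈ R d, ∑ f ∈ F, b i f := by
      have h1 : ∑ f ∈ K d, load C y f = ∑ i ∈ C, ∑ f ∈ K d, y i f := by
        rw [Finset.sum_comm]; rfl
      rw [h1, ← Finset.sum_filter_add_sum_filter_not C
        (fun i => ∃ f' ∈ U, y i f' ≠ 0 ∧ rep f' = d) (fun i => ∑ f ∈ K d, y i f)]
      have h2 : ∑ i ∈ C.filter (fun i => ¬ (∃ f' ∈ U, y i f' ≠ 0 ∧ rep f' = d)),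
          ∑ f ∈ K d, y i f = 0 := by
        apply Finset.sum_eq_zero
        intro i hi
        rw [Finset.mem_filter] at hi
        apply Finset.sum_eq_zero
        intro f hf
        by_contra hyif
        rw [Finset.mem_filter] at hf
        exact hi.2 ⟨f, hf.1, hyif, hrep_eq hf.1 hdU' hf.2.symm ▸ hrepd⟩
      rw [h2, add_zero]
      apply Finset.sum_congr rfl
      intro i hi
      rw [Finset.mem_filter] at hi
      obtain ⟨hiC, f', hf'U, hyif', hrf'⟩ := hi
      have hconnf' : conn d f' := by
        have := (hrep_conn hf'U).1
        rw [hrf'] at this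
        exact this.symm
      rw [← hry i hiC]
      apply Finset.sum_subset (fun x hx => hUF (hKU d hx))
      intro f hfF hfK
      by_contra hyif
      apply hfK
      have hfU : f ∈ U := hentU hiC hyif
      exact Finset.mem_filter.2 ⟨hfU, hconnf'.trans (hstep hiC hyif' hyif)⟩
    -- at most one underfull column
    set W := (K d).filter (fun f => load C y f < u) with hW
    have hW1 : W.card ≤ 1 := by
      by_contra hW2
      have hW2' : 1 < W.card := by omega
      obtain ⟨f, hf, g, hg, hfg⟩ := Finset.one_lt_card.1 hW2'
      rw [hW, Finset.mem_filter, Finset.mem_filter] at hf hg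
      have hfU := hf.1.1; have hgU := hg.1.1
      have hconnfg : conn f g := (hf.1.2).symm.trans hg.1.2
      exact hfg (key f g (hUF hfU) (hUF hgU) hconnfg hf.2 hg.2)
    -- mass lower bound
    have hmlb : u * ((K d).card - W.card) + W.card ≤ ∑ f ∈ K d, load C y f := by
      have e3 := Finset.card_filter_add_card_filter_not (s := K d)
        (p := fun f => load C y f < u)
      rw [← hW] at e3
      have e1 : W.card * 1 ≤ ∑ f ∈ W, load C y f := by
        rw [← smul_eq_mul]
        apply Finset.card_nsmul_le_sum
        intro x hx
        have hxU : x ∈ U := hKU d (Finset.mem_filter.1 (hW ▸ hx)).1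
        have := (Finset.mem_filter.1 hxU).2
        omega
      have e2 : ((K d).filter (fun f => ¬ load C y f < u)).card * u
          ≤ ∑ f ∈ (K d).filter (fun f => ¬ load C y f < u), load C y f := by
        rw [← smul_eq_mul]
        apply Finset.card_nsmul_le_sum
        intro x hx
        have := (Finset.mem_filter.1 hx).2
        omega
      have e4 : ((K d).filter (fun f => ¬ load C y f < u)).card = (K d).card - W.card := by
        omega
      rw [e4] at e2
      rw [← Finset.sum_filter_add_sum_filter_not (K d) (fun f => load C y f < u)
        (fun f => load C y f), ← hW]
      calc u * ((K d).card - W.card) + W.card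
          ≤ (∑ f ∈ (K d).filter (fun f => ¬ load C y f < u), load C y f)
            + ∑ f ∈ W, load C y f := by
            refine add_le_add ?_ ?_
            · rw [mul_comm]; exact e2
            · rw [mul_one] at e1; exact e1
        _ = _ := add_comm _ _
    have hKne : 0 < (K d).card := Finset.card_pos.2 ⟨d, hKmem hdU'⟩
    have hWsub : W.card ≤ (K d).card := Finset.card_le_card (Finset.filter_subset _ _)
    -- mass upper bound
    have hmub : ∑ i ∈ R d, ∑ f ∈ F, b i f
        ≤ u * (∑ i ∈ R d, ((∑ f ∈ F, b i f) + (u - 1)) / u) := by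
      rw [Finset.mul_sum]
      exact Finset.sum_le_sum (fun i _ => ceil_bound hu _)
    obtain ⟨M, hM⟩ : ∃ M, ∑ i ∈ R d, ((∑ f ∈ F, b i f) + (u - 1)) / u = M := ⟨_, rfl⟩
    rw [hM] at hmub ⊢
    rw [hmass] at hmlb
    have hfin : u * ((K d).card - W.card) + W.card ≤ u * M := hmlb.trans hmub
    rcases Nat.le_one_iff_eq_zero_or_eq_one.1 hW1 with hWc | hWc
    · rw [hWc, Nat.sub_zero, add_zero] at hfin
      exact Nat.le_of_mul_le_mul_left hfin hu
    · rw [hWc] at hfin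
      have h5 : u * ((K d).card - 1) < u * M :=
        Nat.lt_of_lt_of_le (Nat.lt_succ_self _) hfin
      have h6 := Nat.lt_of_mul_lt_mul_left h5
      omega
  -- R d are pairwise disjoint
  have hdisj : (D : Set X).PairwiseDisjoint R := by
    intro d hd d' hd' hne
    simp only [Finset.disjoint_left]
    intro i hi hi'
    rw [hR, Finset.mem_filter] at hi hi'
    obtain ⟨hiC, f', hf'U, hyf', hrf'⟩ := hi
    obtain ⟨_, f'', hf''U, hyf'', hrf''⟩ := hi'
    exact hne (hrf' ▸ hrf'' ▸ hrep_eq hf'U hf''U (hstep hiC hyf' hyf''))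
  calc U.card = ∑ d ∈ D, (U.filter (fun x => rep x = d)).card := hcards
    _ = ∑ d ∈ D, (K d).card := Finset.sum_congr rfl (fun d hd => by rw [hfib hd])
    _ ≤ ∑ d ∈ D, ∑ i ∈ R d, ((∑ f ∈ F, b i f) + (u - 1)) / u :=
        Finset.sum_le_sum hcomp
    _ = ∑ i ∈ D.biUnion R, ((∑ f ∈ F, b i f) + (u - 1)) / u :=
        (Finset.sum_biUnion hdisj).symm
    _ ≤ ∑ i ∈ C, ((∑ f ∈ F, b i f) + (u - 1)) / u :=
        Finset.sum_le_sum_of_subset (by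
          intro i hi
          obtain ⟨d, _, hid⟩ := Finset.mem_biUnion.1 hi
          exact (Finset.mem_filter.1 hid).1)

end Count


lemma core (C F : Finset X) (u : ℕ) (b : X → X → ℕ) (c : X → X → ℝ)
    (hu : 0 < u) (hb : ∀ i f, b i f ≠ 0 → i ∈ C ∧ f ∈ F)
    (hcol : ∀ f ∈ F, ∑ i ∈ C, b i f ≤ u) :
    ∃ y : X → X → ℕ,
      Supp b y ∧ Rows C F b y ∧ (∀ f ∈ F, load C y f ≤ u) ∧
      cost C F c y ≤ cost C F c b ∧
      (F.filter (fun f => load C y f ≠ 0)).card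
        ≤ ∑ i ∈ C, ((∑ f ∈ F, b i f) + (u - 1)) / u := by
  classical
  set Feasib : (X → X → ℕ) → Prop :=
    fun y => Supp b y ∧ Rows C F b y ∧ ∀ f ∈ F, load C y f ≤ u with hFeasib
  set emb : (((C ×ˢ F) : Finset (X × X)) → Fin (u + 1)) → (X → X → ℕ) :=
    fun t i f => if h : (i, f) ∈ C ×ˢ F then (t ⟨(i, f), h⟩ : ℕ) else 0 with hemb
  have hmem : ∀ y, Feasib y → y ∈ Finset.image emb Finset.univ := by
    intro y hy
    have hbound : ∀ p : X × X, p ∈ C ×ˢ F → y p.1 p.2 < u + 1 := by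
      rintro ⟨i, f⟩ hp
      dsimp only
      rw [Finset.mem_product] at hp
      have h1 : y i f ≤ load C y f := Finset.single_le_sum (f := fun i' => y i' f)
        (fun _ _ => Nat.zero_le _) hp.1
      have h2 := hy.2.2 f hp.2
      omega
    refine Finset.mem_image.2 ⟨fun p => ⟨y p.1.1 p.1.2, hbound p.1 p.2⟩, Finset.mem_univ _, ?_⟩
    funext i f
    by_cases h : (i, f) ∈ C ×ˢ F
    · simp only [hemb]
      rw [dif_pos h]
    · simp only [hemb, dif_neg h]
      by_contra hne
      have := hb i f (hy.1 i f (fun e => hne e.symm))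
      exact h (Finset.mem_product.2 this)
  have hbFeas : Feasib b :=
    ⟨fun _ _ h => h, fun i _ => rfl, fun f hf => hcol f hf⟩
  set YF := (Finset.image emb Finset.univ).filter Feasib with hYF
  have hbYF : b ∈ YF := Finset.mem_filter.2 ⟨hmem b hbFeas, hbFeas⟩
  obtain ⟨y₀, h0mem, h0min⟩ := Finset.exists_min_image YF (cost C F c) ⟨b, hbYF⟩
  set Φ : (X → X → ℕ) → ℕ := fun y => ∑ f ∈ F, (load C y f) ^ 2 with hΦ
  obtain ⟨y, hymem, hymax⟩ := Finset.exists_max_image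
    (YF.filter (fun y' => cost C F c y' = cost C F c y₀)) Φ
    ⟨y₀, Finset.mem_filter.2 ⟨h0mem, rfl⟩⟩
  rw [Finset.mem_filter, Finset.mem_filter] at hymem
  obtain ⟨⟨_, hyFeas⟩, hycost⟩ := hymem
  have hmin : ∀ y', Feasib y' → cost C F c y ≤ cost C F c y' := by
    intro y' h
    rw [hycost]
    exact h0min y' (Finset.mem_filter.2 ⟨hmem y' h, h⟩)
  have hmax : ∀ y', Feasib y' → cost C F c y' = cost C F c y → Φ y' ≤ Φ y := by
    intro y' h he
    exact hymax y' (Finset.mem_filter.2 ⟨Finset.mem_filter.2 ⟨hmem y' h, h⟩,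
      he.trans hycost⟩)
  have key : ∀ f g, f ∈ F → g ∈ F → (graph C y).Reachable f g →
      load C y f < u → load C y g < u → f = g := by
    intro f g hfF hgF hreach hfu hgu
    by_contra hne
    obtain ⟨w⟩ := hreach
    obtain ⟨D, y1, y2, hs1, hs2, hr1, hr2, hc1, hc2, hlo, hl1f, hl1g, hl2f, hl2g, _, _⟩ :=
      shift (c := c) y hb hyFeas.1 hyFeas.2.1 w.toPath.1 w.toPath.2 hne
    have hF1 : Feasib y1 := by
      refine ⟨hs1, hr1, fun h hh => ?_⟩
      by_cases h1 : h = f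
      · subst h1; have := hyFeas.2.2 h hh; omega
      · by_cases h2 : h = g
        · subst h2; omega
        · rw [(hlo h h1 h2).1]; exact hyFeas.2.2 h hh
    have hF2 : Feasib y2 := by
      refine ⟨hs2, hr2, fun h hh => ?_⟩
      by_cases h1 : h = f
      · subst h1; omega
      · by_cases h2 : h = g
        · subst h2; have := hyFeas.2.2 h hh; omega
        · rw [(hlo h h1 h2).2]; exact hyFeas.2.2 h hh
    have hD1 := hmin y1 hF1
    have hD2 := hmin y2 hF2
    have hD0 : D = 0 := by rw [hc1] at hD1; rw [hc2] at hD2; linarith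
    have hΦ1 := hmax y1 hF1 (by rw [hc1, hD0]; ring)
    have hΦ2 := hmax y2 hF2 (by rw [hc2, hD0]; ring)
    simp only [hΦ] at hΦ1 hΦ2
    have hS1 : ∑ x ∈ (F.erase f).erase g, (load C y1 x) ^ 2
        = ∑ x ∈ (F.erase f).erase g, (load C y x) ^ 2 :=
      Finset.sum_congr rfl (fun x hx => by
        rw [(hlo x (Finset.mem_erase.1 (Finset.mem_erase.1 hx).2).1
          (Finset.mem_erase.1 hx).1).1])
    have hS2 : ∑ x ∈ (F.erase f).erase g, (load C y2 x) ^ 2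
        = ∑ x ∈ (F.erase f).erase g, (load C y x) ^ 2 :=
      Finset.sum_congr rfl (fun x hx => by
        rw [(hlo x (Finset.mem_erase.1 (Finset.mem_erase.1 hx).2).1
          (Finset.mem_erase.1 hx).1).2])
    rw [sum_split_two F _ hfF hgF hne,
      sum_split_two F (fun f' => (load C y f') ^ 2) hfF hgF hne, hS1] at hΦ1
    rw [sum_split_two F _ hfF hgF hne,
      sum_split_two F (fun f' => (load C y f') ^ 2) hfF hgF hne, hS2] at hΦ2
    obtain ⟨a1, ha1⟩ : ∃ a1, load C y1 f = a1 := ⟨_, rfl⟩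
    obtain ⟨b2, hb2⟩ : ∃ b2, load C y2 g = b2 := ⟨_, rfl⟩
    have hA : load C y f = a1 + 1 := by omega
    have hB : load C y g = b2 + 1 := by omega
    rw [ha1, hl1g, hA, hB] at hΦ1
    rw [hb2, hl2f, hA, hB] at hΦ2
    have q1 := (add_le_add_iff_right _).1 hΦ1
    have q2 := (add_le_add_iff_right _).1 hΦ2
    have r1 : b2 + 1 ≤ a1 := by nlinarith [q1]
    have r2 : a1 + 1 ≤ b2 := by nlinarith [q2]
    omega
  refine ⟨y, hyFeas.1, hyFeas.2.1, hyFeas.2.2, hmin b hbFeas, ?_⟩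
  exact count y hu hyFeas.1 hyFeas.2.1 hyFeas.2.2 hb key


lemma alloc (B : Finset X) : ∀ (A : Finset X) (m : X → ℕ), A.card = ∑ f ∈ B, m f →
    ∃ g : X → X, (∀ a ∈ A, g a ∈ B) ∧
      ∀ f ∈ B, (A.filter (fun a => g a = f)).card = m f := by
  classical
  induction B using Finset.induction_on with
  | empty =>
    intro A m hA
    rw [Finset.sum_empty] at hA
    refine ⟨id, fun a ha => ?_, fun f hf => absurd hf (Finset.notMem_empty f)⟩
    rw [Finset.card_eq_zero.1 hA] at ha
    exact absurd ha (Finset.notMem_empty a)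
  | @insert f₀ B' hf₀ ih =>
    intro A m hA
    rw [Finset.sum_insert hf₀] at hA
    obtain ⟨S, hSA, hScard⟩ := Finset.exists_subset_card_eq (show m f₀ ≤ A.card by omega)
    obtain ⟨g', hg'B, hg'c⟩ := ih (A \ S) m (by
      rw [Finset.card_sdiff_of_subset hSA, hScard, hA]; omega)
    refine ⟨fun a => if a ∈ S then f₀ else g' a, ?_, ?_⟩
    · intro a ha
      by_cases haS : a ∈ S
      · simp [haS, Finset.mem_insert_self]
      · simp only [haS, if_false]
        exact Finset.mem_insert_of_mem (hg'B a (Finset.mem_sdiff.2 ⟨ha, haS⟩))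
    · intro f hf
      rcases Finset.mem_insert.1 hf with rfl | hfB'
      · have : A.filter (fun a => (if a ∈ S then f else g' a) = f) = S := by
          ext a
          rw [Finset.mem_filter]
          constructor
          · rintro ⟨haA, hcond⟩
            by_contra haS
            rw [if_neg haS] at hcond
            exact hf₀ (hcond ▸ hg'B a (Finset.mem_sdiff.2 ⟨haA, haS⟩))
          · intro haS
            exact ⟨hSA haS, by rw [if_pos haS]⟩
        rw [this, hScard]
      · have : A.filter (fun a => (if a ∈ S then f₀ else g' a) = f)
            = (A \ S).filter (fun a => g' a = f) := by
          ext a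
          rw [Finset.mem_filter, Finset.mem_filter, Finset.mem_sdiff]
          constructor
          · rintro ⟨haA, hcond⟩
            by_cases haS : a ∈ S
            · rw [if_pos haS] at hcond
              exact absurd (hcond ▸ hfB') hf₀
            · rw [if_neg haS] at hcond
              exact ⟨⟨haA, haS⟩, hcond⟩
          · rintro ⟨⟨haA, haS⟩, hcond⟩
            exact ⟨haA, by rw [if_neg haS]; exact hcond⟩
        rw [this]
        exact hg'c f hfB'


lemma ceil_le {u n m : ℕ} (hu : 0 < u) (h : n ≤ u * m) : (n + (u - 1)) / u ≤ m := by
  have h2 : n + (u - 1) < (m + 1) * u := by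
    have h3 : u - 1 < u := Nat.sub_lt hu one_pos
    calc n + (u - 1) < u * m + u := by omega
      _ = (m + 1) * u := by ring
  exact Nat.lt_succ_iff.1 ((Nat.div_lt_iff_lt_mul hu).2 h2)

end CKMaux

open CKMaux Finset

/-- **Theorem 2.** Let `(k, u, F, C, d)` be a hard uniform CKM instance with `|C| ≤ u·|F|`,
and let `C₀` be the minimum connection cost when all facilities of `F` are open.
Given a solution of cost `C'` to the soft uniform CKM instance `(k, u, C, C, d)`
(a multiset of at most `k` open facilities at locations of `C`, described by the
multiplicity function `opn`, together with an assignment `σs` of the clients such that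
each location `i` serves at most `u · opn i` clients), there is a solution to the hard
instance `(k, u, F, C, d)` of cost at most `C₀ + 2C'`. -/
theorem stmt1 (X : Type) [PseudoMetricSpace X] [DecidableEq X]
    (F C : Finset X) (k u : ℕ) (hk : 0 < k) (hu : 0 < u)
    (hCF : C.card ≤ u * F.card)
    (C₀ C' : ℝ)
    (hC₀ : IsLeast { t : ℝ | ∃ τ : X → X,
        (∀ j ∈ C, τ j ∈ F) ∧
        (∀ i ∈ F, (C.filter (fun j => τ j = i)).card ≤ u) ∧
        t = ∑ j ∈ C, dist j (τ j) } C₀)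
    (opn : X → ℕ) (σs : X → X)
    (hsupp : ∀ i : X, opn i ≠ 0 → i ∈ C)
    (hopk : ∑ i ∈ C, opn i ≤ k)
    (hσs : ∀ j ∈ C, σs j ∈ C ∧ opn (σs j) ≠ 0)
    (hcap : ∀ i ∈ C, (C.filter (fun j => σs j = i)).card ≤ u * opn i)
    (hC' : C' = ∑ j ∈ C, dist j (σs j)) :
    ∃ (F' : Finset X) (σ : X → X), F' ⊆ F ∧ F'.card ≤ k ∧
      (∀ j ∈ C, σ j ∈ F') ∧
      (∀ i ∈ F', (C.filter (fun j => σ j = i)).card ≤ u) ∧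
      ∑ j ∈ C, dist j (σ j) ≤ C₀ + 2 * C' := by
  classical
  obtain ⟨⟨τ, hτF, hτcap, hC₀eq⟩, -⟩ := hC₀
  set b : X → X → ℕ := fun i f => (C.filter (fun j => σs j = i ∧ τ j = f)).card with hbdef
  set c : X → X → ℝ := fun i f =>
    if h : (C.filter (fun j => σs j = i ∧ τ j = f)).Nonempty then
      (C.filter (fun j => σs j = i ∧ τ j = f)).inf' h (fun j => dist j i + dist j (τ j))
    else 0 with hcdef
  have hbmem : ∀ i f, b i f ≠ 0 → (C.filter (fun j => σs j = i ∧ τ j = f)).Nonempty := by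
    intro i f h
    exact Finset.card_pos.1 (Nat.pos_of_ne_zero h)
  have hb : ∀ i f, b i f ≠ 0 → i ∈ C ∧ f ∈ F := by
    intro i f h
    obtain ⟨j, hj⟩ := hbmem i f h
    rw [Finset.mem_filter] at hj
    exact ⟨hj.2.1 ▸ (hσs j hj.1).1, hj.2.2 ▸ hτF j hj.1⟩
  -- row sums of b
  have hrowb : ∀ i, ∑ f ∈ F, b i f = (C.filter (fun j => σs j = i)).card := by
    intro i
    rw [Finset.card_eq_sum_card_fiberwise (f := τ) (t := F)
      (fun j hj => hτF j (Finset.mem_filter.1 hj).1)]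
    apply Finset.sum_congr rfl
    intro f _
    rw [hbdef, Finset.filter_filter]
  -- column sums of b
  have hcolb : ∀ f ∈ F, ∑ i ∈ C, b i f ≤ u := by
    intro f hf
    have h1 : (C.filter (fun j => τ j = f)).card = ∑ i ∈ C, b i f := by
      rw [Finset.card_eq_sum_card_fiberwise (f := σs) (t := C)
        (fun j hj => (hσs j (Finset.mem_filter.1 hj).1).1)]
      apply Finset.sum_congr rfl
      intro i _
      rw [Finset.filter_filter, hbdef]
      congr 1
      apply Finset.filter_congr
      intro x _
      exact and_comm
    rw [← h1]
    exact hτcap f hf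
  obtain ⟨y, hsy, hry, hcy, hcosty, hcard⟩ := core C F u b c hu hb hcolb
  -- facts about c
  have hc_le : ∀ i f j, j ∈ C → σs j = i → τ j = f →
      c i f ≤ dist j i + dist j (τ j) := by
    intro i f j hjC hji hjf
    have hjm : j ∈ C.filter (fun j' => σs j' = i ∧ τ j' = f) :=
      Finset.mem_filter.2 ⟨hjC, hji, hjf⟩
    simp only [hcdef]
    rw [dif_pos ⟨j, hjm⟩]
    exact Finset.inf'_le _ hjm
  have hdist_le_c : ∀ i f, b i f ≠ 0 → dist i f ≤ c i f := by
    intro i f h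
    have hne := hbmem i f h
    obtain ⟨j₀, hj₀, hj₀e⟩ := Finset.exists_mem_eq_inf' hne
      (fun j => dist j i + dist j (τ j))
    rw [Finset.mem_filter] at hj₀
    obtain ⟨hj₀C, hj₀i, hj₀f⟩ := hj₀
    simp only [hcdef]
    rw [dif_pos hne, hj₀e]
    calc dist i f = dist i (τ j₀) := by rw [hj₀f]
      _ ≤ dist i j₀ + dist j₀ (τ j₀) := dist_triangle _ _ _
      _ = dist j₀ i + dist j₀ (τ j₀) := by rw [dist_comm]
  -- cost of b is at most C' + C₀
  have hcostb : cost C F c b ≤ C' + C₀ := by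
    have hstep : ∀ i ∈ C, ∑ f ∈ F, (b i f : ℝ) * c i f
        ≤ ∑ j ∈ C.filter (fun j => σs j = i), (dist j i + dist j (τ j)) := by
      intro i _
      rw [← Finset.sum_fiberwise_of_maps_to (g := τ) (t := F)
        (fun j hj => hτF j (Finset.mem_filter.1 hj).1)
        (fun j => dist j i + dist j (τ j))]
      apply Finset.sum_le_sum
      intro f _
      have e1 : (C.filter (fun j => σs j = i)).filter (fun j => τ j = f)
          = C.filter (fun j => σs j = i ∧ τ j = f) := by
        rw [Finset.filter_filter]
      have e2 : b i f = ((C.filter (fun j => σs j = i)).filter (fun j => τ j = f)).card := by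
        rw [e1, hbdef]
      rw [e2]
      have h3 : ((C.filter (fun j => σs j = i)).filter (fun j => τ j = f)).card • c i f
          ≤ ∑ j ∈ (C.filter (fun j => σs j = i)).filter (fun j => τ j = f),
            (dist j i + dist j (τ j)) := by
        apply Finset.card_nsmul_le_sum
        intro j hj
        rw [e1, Finset.mem_filter] at hj
        exact hc_le i f j hj.1 hj.2.1 hj.2.2
      rw [nsmul_eq_mul] at h3
      exact h3
    have hsplit : ∑ i ∈ C, ∑ j ∈ C.filter (fun j => σs j = i), (dist j i + dist j (τ j))
        = ∑ j ∈ C, (dist j (σs j) + dist j (τ j)) := by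
      rw [← Finset.sum_fiberwise_of_maps_to (g := σs) (t := C)
        (fun j hj => (hσs j hj).1) (fun j => dist j (σs j) + dist j (τ j))]
      apply Finset.sum_congr rfl
      intro i _
      apply Finset.sum_congr rfl
      intro j hj
      rw [(Finset.mem_filter.1 hj).2]
    calc cost C F c b ≤ ∑ i ∈ C, ∑ j ∈ C.filter (fun j => σs j = i),
          (dist j i + dist j (τ j)) := Finset.sum_le_sum hstep
      _ = ∑ j ∈ C, (dist j (σs j) + dist j (τ j)) := hsplit
      _ = C' + C₀ := by rw [Finset.sum_add_distrib, hC', hC₀eq]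
  -- allocate clients according to y
  have halloc : ∀ i, ∃ g : X → X, i ∈ C →
      ((∀ a ∈ C.filter (fun j => σs j = i), g a ∈ F) ∧
       ∀ f ∈ F, ((C.filter (fun j => σs j = i)).filter (fun a => g a = f)).card = y i f) := by
    intro i
    by_cases hiC : i ∈ C
    · obtain ⟨g, h1, h2⟩ := alloc F (C.filter (fun j => σs j = i)) (y i)
        (by rw [← hrowb i, ← hry i hiC])
      exact ⟨g, fun _ => ⟨h1, h2⟩⟩
    · exact ⟨id, fun h => absurd h hiC⟩
  choose G hG using halloc
  refine ⟨F.filter (fun f => load C y f ≠ 0), fun j => G (σs j) j,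
    Finset.filter_subset _ _, ?_, ?_, ?_, ?_⟩
  · -- cardinality bound
    calc (F.filter (fun f => load C y f ≠ 0)).card
        ≤ ∑ i ∈ C, ((∑ f ∈ F, b i f) + (u - 1)) / u := hcard
      _ ≤ ∑ i ∈ C, opn i := by
          apply Finset.sum_le_sum
          intro i hi
          rw [hrowb i]
          exact ceil_le hu (hcap i hi)
      _ ≤ k := hopk
  · -- clients go to open facilities
    intro j hj
    have hiC : σs j ∈ C := (hσs j hj).1
    obtain ⟨hGF, hGc⟩ := hG (σs j) hiC
    have haj : j ∈ C.filter (fun j' => σs j' = σs j) := Finset.mem_filter.2 ⟨hj, rfl⟩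
    have hgF : G (σs j) j ∈ F := hGF j haj
    have hykey : y (σs j) (G (σs j) j) ≠ 0 := by
      have := hGc (G (σs j) j) hgF
      have hjm : j ∈ (C.filter (fun j' => σs j' = σs j)).filter
          (fun a => G (σs j) a = G (σs j) j) := Finset.mem_filter.2 ⟨haj, rfl⟩
      have hpos := Finset.card_pos.2 ⟨j, hjm⟩
      omega
    have hload : y (σs j) (G (σs j) j) ≤ load C y (G (σs j) j) :=
      Finset.single_le_sum (f := fun i' => y i' (G (σs j) j))
        (fun _ _ => Nat.zero_le _) hiC
    exact Finset.mem_filter.2 ⟨hgF, by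
      show load C y (G (σs j) j) ≠ 0
      omega⟩
  · -- capacities
    intro f hf
    have hfF : f ∈ F := (Finset.mem_filter.1 hf).1
    rw [Finset.card_eq_sum_card_fiberwise (f := σs) (t := C)
      (fun j hj => (hσs j (Finset.mem_filter.1 hj).1).1)]
    have heq : ∀ i ∈ C, ((C.filter (fun j => G (σs j) j = f)).filter
        (fun j => σs j = i)).card = y i f := by
      intro i hi
      obtain ⟨hGF, hGc⟩ := hG i hi
      rw [← hGc f hfF]
      congr 1
      ext j
      rw [Finset.mem_filter, Finset.mem_filter, Finset.mem_filter, Finset.mem_filter]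
      constructor
      · rintro ⟨⟨hjC, hjf⟩, hji⟩
        exact ⟨⟨hjC, hji⟩, by rw [← hji]; exact hjf⟩
      · rintro ⟨⟨hjC, hji⟩, hjf⟩
        exact ⟨⟨hjC, by rw [hji]; exact hjf⟩, hji⟩
    rw [Finset.sum_congr rfl heq]
    exact hcy f hfF
  · -- cost bound
    have hmain : ∑ j ∈ C, dist j (G (σs j) j)
        ≤ (∑ j ∈ C, dist j (σs j)) + cost C F c y := by
      rw [← Finset.sum_fiberwise_of_maps_to (g := σs) (t := C)
        (fun j hj => (hσs j hj).1) (fun j => dist j (G (σs j) j)),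
        ← Finset.sum_fiberwise_of_maps_to (g := σs) (t := C)
        (fun j hj => (hσs j hj).1) (fun j => dist j (σs j))]
      unfold cost
      rw [← Finset.sum_add_distrib]
      apply Finset.sum_le_sum
      intro i hi
      obtain ⟨hGF, hGc⟩ := hG i hi
      have e0 : ∀ j ∈ C.filter (fun j' => σs j' = i), dist j (G (σs j) j)
          ≤ dist j (σs j) + dist i (G i j) := by
        intro j hj
        have hji : σs j = i := (Finset.mem_filter.1 hj).2
        rw [hji]
        exact dist_triangle _ _ _
      have e1 : ∑ j ∈ C.filter (fun j' => σs j' = i), dist j (G (σs j) j)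
          ≤ (∑ j ∈ C.filter (fun j' => σs j' = i), dist j (σs j))
            + ∑ j ∈ C.filter (fun j' => σs j' = i), dist i (G i j) := by
        rw [← Finset.sum_add_distrib]
        exact Finset.sum_le_sum e0
      have e2 : ∑ j ∈ C.filter (fun j' => σs j' = i), dist i (G i j)
          ≤ ∑ f ∈ F, (y i f : ℝ) * c i f := by
        rw [← Finset.sum_fiberwise_of_maps_to (g := G i) (t := F) hGF
          (fun j => dist i (G i j))]
        apply Finset.sum_le_sum
        intro f hfF
        have e3 : ∑ j ∈ (C.filter (fun j' => σs j' = i)).filter (fun a => G i a = f),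
            dist i (G i j) = (y i f : ℝ) * dist i f := by
          have e3a : ∑ j ∈ (C.filter (fun j' => σs j' = i)).filter (fun a => G i a = f),
              dist i (G i j) = ∑ j ∈ (C.filter (fun j' => σs j' = i)).filter
              (fun a => G i a = f), dist i f :=
            Finset.sum_congr rfl (fun j hj => by rw [(Finset.mem_filter.1 hj).2])
          rw [e3a, Finset.sum_const, hGc f hfF, nsmul_eq_mul]
        rw [e3]
        by_cases hy0 : y i f = 0
        · rw [hy0]; simp
        · have := hdist_le_c i f (hsy i f hy0)
          apply mul_le_mul_of_nonneg_left this
          positivity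
      exact e1.trans (by linarith [e2])
    have hfinal := hmain.trans (by linarith [hcosty.trans hcostb, hC'.ge] :
      (∑ j ∈ C, dist j (σs j)) + cost C F c y ≤ C' + (C' + C₀))
    show ∑ j ∈ C, dist j (G (σs j) j) ≤ C₀ + 2 * C'
    linarith [hfinal]
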